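/- A σ1-positive braid is never trivial: in B∞, for every n ≥ 1 and all braids c0, c1, …, cn, the element sh(c0)·σ1·sh(c1)·σ1 ⋯ σ1·sh(cn) is not equal to 1. Consequently, the braid shelf (B∞, ◃) with a ◃ b := a · sh(b) · σ1 · sh(a)⁻¹ is acyclic: the transitive closure of the division relation a ⊏ b ⇔ (∃x, a ◃ x = b) is irreflexive. -/

import Mathlib

/-- The braid relations on the generators `σ₁, σ₂, …` (generator `i : ℕ` stands
for `σ_{i+1}`). -/
def braidRels : Set (FreeGroup ℕ) :=
  {r | ∃ i j : ℕ,
    (i + 2 ≤ j ∧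
      r = FreeGroup.of i * FreeGroup.of j * (FreeGroup.of i)⁻¹ * (FreeGroup.of j)⁻¹) ∨
    (j = i + 1 ∧
      r = FreeGroup.of i * FreeGroup.of j * FreeGroup.of i *
        (FreeGroup.of j)⁻¹ * (FreeGroup.of i)⁻¹ * (FreeGroup.of j)⁻¹)}

/-- The braid group `B∞` on infinitely many strands, as a presented group. -/
abbrev BInf : Type := PresentedGroup braidRels

/-- The generator `σ_{i+1}` of `B∞`; in particular `σ 0` is `σ₁`. -/
def σ (i : ℕ) : BInf := PresentedGroup.of i

/-- The braid shelf operation `a ◃ b := a * sh b * σ₁ * (sh a)⁻¹`. -/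
def braidAct (sh : BInf →* BInf) (a b : BInf) : BInf :=
  a * sh b * σ 0 * (sh a)⁻¹

/-- `posProd sh c n = sh (c 0) * σ₁ * sh (c 1) * σ₁ * ⋯ * σ₁ * sh (c n)`,
the generic σ₁-positive braid with `n` occurrences of `σ₁`. -/
def posProd (sh : BInf →* BInf) (c : ℕ → BInf) : ℕ → BInf
  | 0 => sh (c 0)
  | n + 1 => posProd sh c n * σ 0 * sh (c (n + 1))

namespace BraidAux
open FreeGroup List

abbrev W := List (ℕ × Bool)
abbrev F := FreeGroup ℕ
def xx (i : ℕ) : F := FreeGroup.of i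
def Reduced (L : W) : Prop := L.Chain' (fun a b => ¬(a.1 = b.1 ∧ a.2 = !b.2))

lemma reduce_eq_self {L : W} (h : Reduced L) : FreeGroup.reduce L = L := by
  induction L with
  | nil => rfl
  | cons hd tl ih =>
    have h2 : Reduced tl := h.tail
    rw [FreeGroup.reduce.cons, ih h2]
    cases tl with
    | nil => rfl
    | cons b t =>
      have hc : ¬(hd.1 = b.1 ∧ hd.2 = !b.2) := (List.isChain_cons_cons.mp h).1
      simp [hc]

lemma toWord_mk_reduced {L : W} (h : Reduced L) : (FreeGroup.mk L).toWord = L := by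
  rw [FreeGroup.toWord_mk, reduce_eq_self h]

lemma reduced_reduce (L : W) : Reduced (FreeGroup.reduce L) := by
  induction L with
  | nil => exact List.isChain_nil
  | cons hd tl ih =>
    rw [FreeGroup.reduce.cons]
    cases h : FreeGroup.reduce tl with
    | nil => exact List.isChain_singleton _
    | cons b t =>
      rw [h] at ih
      by_cases hc : hd.1 = b.1 ∧ hd.2 = !b.2
      · simp only [hc, if_true]
        exact ih.tail
      · simp only [hc, if_false]
        exact List.isChain_cons_cons.mpr ⟨hc, ih⟩

lemma reduced_toWord (g : F) : Reduced g.toWord := by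
  rw [← FreeGroup.reduce_toWord]
  exact reduced_reduce _

def gsub (I : Set ℕ) : Subgroup F := Subgroup.closure (FreeGroup.of '' I)

lemma invRev_replicate (n : ℕ) (d : ℕ) (b : Bool) :
    FreeGroup.invRev (List.replicate n (d, b)) = List.replicate n (d, !b) := by
  unfold FreeGroup.invRev
  rw [List.map_replicate, List.reverse_replicate]

lemma zpow_word (d : ℕ) (a : ℤ) :
    (FreeGroup.of d ^ a).toWord = List.replicate a.natAbs (d, decide (0 < a)) := by
  rcases lt_trichotomy a 0 with h | h | h
  · obtain ⟨n, rfl⟩ : ∃ n : ℕ, a = -n := ⟨a.natAbs, by omega⟩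
    rw [decide_eq_false (by omega : ¬ (0:ℤ) < -n)]
    have h1 : ((-(n:ℤ))).natAbs = n := by simp
    rw [h1, zpow_neg, zpow_natCast, FreeGroup.toWord_inv, FreeGroup.toWord_of_pow,
      invRev_replicate]
    rfl
  · subst h; simp [FreeGroup.toWord_one]
  · obtain ⟨n, rfl⟩ : ∃ n : ℕ, a = n := ⟨a.natAbs, by omega⟩
    rw [decide_eq_true (by exact_mod_cast h : (0:ℤ) < n)]
    have h1 : ((n:ℤ)).natAbs = n := by simp
    rw [h1, zpow_natCast, FreeGroup.toWord_of_pow]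

lemma reduced_replicate (n d b) : Reduced (List.replicate n (d, b)) := by
  induction n with
  | zero => exact List.isChain_nil
  | succ n ih =>
    cases n with
    | zero => exact List.isChain_singleton _
    | succ m =>
      rw [List.replicate_succ]
      refine List.isChain_cons_cons.mpr ⟨?_, ih⟩
      simp

/-- `chain d s0 [(a1,t1),...]` is `s0 * (x d)^a1 * t1 * (x d)^a2 * t2 * ...` -/
def chain (d : ℕ) (s0 : F) (l : List (ℤ × F)) : F :=
  s0 * (l.map fun p => (xx d) ^ p.1 * p.2).prod

lemma chain_nil (d s0) : chain d s0 [] = s0 := by simp [chain]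

lemma chain_cons (d s0 a t l) :
    chain d s0 ((a, t) :: l) = s0 * (xx d) ^ a * chain d t l := by
  simp [chain, mul_assoc]


lemma letters_of_mem_gsub {I : Set ℕ} {g : F} (h : g ∈ gsub I) :
    ∀ p ∈ g.toWord, p.1 ∈ I := by
  induction h using Subgroup.closure_induction with
  | mem g hg =>
    obtain ⟨a, ha, rfl⟩ := hg
    intro p hp
    rw [FreeGroup.toWord_of] at hp
    simp at hp
    simp [hp, ha]
  | one => intro p hp; simp [FreeGroup.toWord_one] at hp
  | mul a b _ _ iha ihb =>
    intro p hp
    have := (FreeGroup.toWord_mul_sublist a b).mem hp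
    rcases List.mem_append.mp this with h' | h'
    · exact iha p h'
    · exact ihb p h'
  | inv a _ ih =>
    intro p hp
    rw [FreeGroup.toWord_inv] at hp
    unfold FreeGroup.invRev at hp
    rw [List.mem_reverse, List.mem_map] at hp
    obtain ⟨q, hq, rfl⟩ := hp
    exact ih q hq

def goodWord (d : ℕ) (Lw : W) : Prop :=
  Reduced Lw ∧ Lw ≠ [] ∧ (∀ p ∈ Lw.head?, p.1 ≠ d) ∧ (∀ p ∈ Lw.getLast?, p.1 ≠ d)

lemma chain_word (d : ℕ) : ∀ (l : List (ℤ × F)) (s0 : F),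
    s0 ∈ gsub {i | i ≠ d} → s0 ≠ 1 →
    (∀ p ∈ l, p.1 ≠ 0 ∧ p.2 ∈ gsub {i | i ≠ d} ∧ p.2 ≠ 1) →
    ∃ Lw : W, chain d s0 l = FreeGroup.mk Lw ∧ goodWord d Lw := by
  intro l
  induction l with
  | nil =>
    intro s0 hs hs1 _
    refine ⟨s0.toWord, by rw [chain_nil, FreeGroup.mk_toWord], reduced_toWord _,
      by simpa [FreeGroup.toWord_eq_nil_iff] using hs1, ?_, ?_⟩
    · exact fun p hp => letters_of_mem_gsub hs p (List.mem_of_mem_head? hp)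
    · exact fun p hp => letters_of_mem_gsub hs p (List.mem_of_mem_getLast? hp)
  | cons q l ih =>
    rcases q with ⟨a, t⟩
    intro s0 hs hs1 hl
    obtain ⟨ha, ht, ht1⟩ := hl (a, t) (List.mem_cons_self)
    obtain ⟨Lw', hmk', hred', hne', hhd', hlast'⟩ :=
      ih t ht ht1 (fun p hp => hl p (List.mem_cons_of_mem _ hp))
    set b : Bool := decide (0 < a) with hb
    set B : W := List.replicate a.natAbs (d, b) with hB
    have hBne : B ≠ [] := by
      rw [hB]
      intro h
      have := congrArg List.length h
      simp at this
      omega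
    have hBword : (xx d) ^ a = FreeGroup.mk B := by
      rw [hB, hb, ← zpow_word d a, FreeGroup.mk_toWord]; rfl
    have hAne : s0.toWord ≠ [] := by simpa [FreeGroup.toWord_eq_nil_iff] using hs1
    refine ⟨s0.toWord ++ (B ++ Lw'), ?_, ?_, ?_, ?_, ?_⟩
    · rw [← List.append_assoc, ← FreeGroup.mul_mk, ← FreeGroup.mul_mk, ← hBword,
        FreeGroup.mk_toWord, ← hmk', chain_cons]
    · refine List.IsChain.append (reduced_toWord s0)
        (List.IsChain.append (reduced_replicate _ _ _) hred' ?_) ?_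
      · intro x hx y hy
        have hx' : x = (d, b) := List.eq_of_mem_replicate (List.mem_of_mem_getLast? hx)
        have : y.1 ≠ d := hhd' y hy
        subst hx'
        simp
        intro hyd
        exact absurd hyd.symm this
      · intro x hx y hy
        have hx' : x.1 ≠ d := letters_of_mem_gsub hs x (List.mem_of_mem_getLast? hx)
        rw [List.head?_append_of_ne_nil _ hBne] at hy
        have hy' : y = (d, b) := List.eq_of_mem_replicate (List.mem_of_mem_head? hy)
        subst hy'
        simp
        intro h'
        exact absurd h' hx'
    · simp [hAne]
    · intro p hp
      rw [List.head?_append_of_ne_nil _ hAne] at hp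
      exact fun hpd => (letters_of_mem_gsub hs p (List.mem_of_mem_head? hp)) hpd
    · intro p hp
      rw [List.getLast?_append_of_ne_nil _ (fun h => hBne (List.append_eq_nil_iff.mp h).1)] at hp
      rw [List.getLast?_append_of_ne_nil _ hne'] at hp
      exact hlast' p hp


lemma mem_gsub_of_letters {I : Set ℕ} : ∀ (L : W), (∀ p ∈ L, p.1 ∈ I) →
    FreeGroup.mk L ∈ gsub I := by
  intro L
  induction L with
  | nil => intro _; rw [← FreeGroup.one_eq_mk]; exact one_mem _
  | cons hd tl ih =>
    intro h
    have hsplit : FreeGroup.mk (hd :: tl) = FreeGroup.mk [hd] * FreeGroup.mk tl := by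
      rw [FreeGroup.mul_mk]; rfl
    rw [hsplit]
    refine mul_mem ?_ (ih fun p hp => h p (List.mem_cons_of_mem _ hp))
    have h1 : hd.1 ∈ I := h hd (List.mem_cons_self)
    rcases hd with ⟨a, b⟩
    cases b
    · have h2 : FreeGroup.mk [(a, false)] = (FreeGroup.of a)⁻¹ := by
        have h3 : (FreeGroup.of a)⁻¹ = FreeGroup.mk (FreeGroup.invRev [(a, true)]) := by
          rw [← FreeGroup.inv_mk]; rfl
        rw [h3]; rfl
      rw [h2]
      exact inv_mem (Subgroup.subset_closure ⟨a, h1, rfl⟩)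
    · exact Subgroup.subset_closure ⟨a, h1, rfl⟩

lemma run_replicate (d : ℕ) (b : Bool) : ∀ (run : W), Reduced run →
    (∀ p ∈ run, p.1 = d) → run.head? = some (d, b) →
    run = List.replicate run.length (d, b) := by
  intro run
  induction run with
  | nil => intro _ _ h; simp at h
  | cons q rest ih =>
    intro hred hall hhd
    have hq : q = (d, b) := by simpa using hhd
    subst hq
    rw [List.length_cons, List.replicate_succ]
    cases rest with
    | nil => rfl
    | cons r rest2 =>
      have hr1 : r.1 = d := hall r (by simp)
      have hnc : ¬((d, b).1 = r.1 ∧ (d, b).2 = !r.2) := (List.isChain_cons_cons.mp hred).1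
      have hr : r = (d, b) := by
        rcases r with ⟨r1, r2⟩
        simp only at hr1
        subst hr1
        have hb : ¬(b = !r2) := fun h => hnc ⟨rfl, h⟩
        have hr2 : r2 = b := by cases b <;> cases r2 <;> simp at hb ⊢
        rw [hr2]
      have ihr : (r :: rest2) = List.replicate (r :: rest2).length (d, b) :=
        ih hred.tail (fun p hp => hall p (List.mem_cons_of_mem _ hp))
          (by rw [hr]; rfl)
      exact congrArg _ ihr

lemma dropWhile_head_not {α : Type*} (p : α → Bool) : ∀ (l : List α) (q : α)
    (rest : List α), l.dropWhile p = q :: rest → p q = false := by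
  intro l
  induction l with
  | nil => intro q rest h; simp at h
  | cons a t ih =>
    intro q rest h
    rw [List.dropWhile_cons] at h
    split at h
    · exact ih q rest h
    · cases h
      simpa using ‹¬p a = true›

lemma parseAux (d : ℕ) : ∀ (N : ℕ) (L : W), L.length ≤ N → Reduced L → L ≠ [] →
    (∀ p ∈ L.head?, p.1 ≠ d) → (∀ p ∈ L.getLast?, p.1 ≠ d) →
    ∃ s0 l, s0 ∈ gsub {i | i ≠ d} ∧ s0 ≠ 1 ∧
      (∀ p ∈ l, p.1 ≠ 0 ∧ p.2 ∈ gsub {i | i ≠ d} ∧ p.2 ≠ 1) ∧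
      FreeGroup.mk L = chain d s0 l := by
  intro N
  induction N with
  | zero =>
    intro L hN _ hne _ _
    cases L with
    | nil => exact absurd rfl hne
    | cons a b => simp at hN
  | succ N IH =>
  intro L hN hred hne hhd hlast
  set P : ℕ × Bool → Bool := fun p => p.1 != d with hP
  set A := L.takeWhile P with hA
  set L1 := L.dropWhile P with hL1
  have hAL : A ++ L1 = L := List.takeWhile_append_dropWhile (p := P) (l := L)
  have hAletters : ∀ p ∈ A, p.1 ≠ d := by
    intro p hp
    have := List.mem_takeWhile_imp hp
    simpa [hP] using this
  have hAne : A ≠ [] := by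
    cases L with
    | nil => exact absurd rfl hne
    | cons q L' =>
      have hq : P q = true := by
        have : q.1 ≠ d := hhd q rfl
        simpa [hP]
      rw [hA, List.takeWhile_cons_of_pos hq]
      simp
  have hAred : Reduced A := by
    rw [← hAL] at hred
    exact (List.isChain_append.mp hred).1
  have hAmem : FreeGroup.mk A ∈ gsub {i | i ≠ d} := mem_gsub_of_letters A hAletters
  have hAone : FreeGroup.mk A ≠ 1 := by
    intro h
    have := toWord_mk_reduced hAred
    rw [h, FreeGroup.toWord_one] at this
    exact hAne this.symm
  cases hL1e : L1 with
  | nil =>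
    refine ⟨FreeGroup.mk A, [], hAmem, hAone, by simp, ?_⟩
    rw [chain_nil, ← hAL, hL1e, List.append_nil]
  | cons q L1' =>
    have hqd : q.1 = d := by
      have := dropWhile_head_not P L q L1' (by rw [← hL1]; exact hL1e)
      simpa [hP] using this
    -- the run of d-letters
    set Q : ℕ × Bool → Bool := fun p => p.1 == d with hQ
    set run := L1.takeWhile Q with hrun
    set L2 := L1.dropWhile Q with hL2
    have hrunL : run ++ L2 = L1 := List.takeWhile_append_dropWhile (p := Q) (l := L1)
    have hrunletters : ∀ p ∈ run, p.1 = d := by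
      intro p hp
      have := List.mem_takeWhile_imp hp
      simpa [hQ] using this
    have hrunne : run ≠ [] := by
      rw [hrun, hL1e, List.takeWhile_cons_of_pos (by simpa [hQ] using hqd)]
      simp
    have hL12red : Reduced L1 := by
      rw [← hAL] at hred
      exact (List.isChain_append.mp hred).2.1
    have hrunred : Reduced run := by
      rw [← hrunL] at hL12red
      exact (List.isChain_append.mp hL12red).1
    have hL2red : Reduced L2 := by
      rw [← hrunL] at hL12red
      exact (List.isChain_append.mp hL12red).2.1
    have hrunhd : run.head? = some q := by
      rw [hrun, hL1e, List.takeWhile_cons_of_pos (by simpa [hQ] using hqd)]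
      rfl
    have hrunrep : run = List.replicate run.length (d, q.2) := by
      refine run_replicate d q.2 run hrunred hrunletters ?_
      rw [hrunhd]
      congr 1
      rcases q with ⟨q1, q2⟩
      simp at hqd
      simp [hqd]
    -- L2 is nonempty
    have hL2ne : L2 ≠ [] := by
      intro h
      have hLlast : L.getLast? = run.getLast? := by
        rw [← hAL, ← hrunL, h, List.append_nil,
          List.getLast?_append_of_ne_nil _ hrunne]
      obtain ⟨r, hr⟩ : ∃ r, run.getLast? = some r := by
        cases hrcase : run with
        | nil => exact absurd hrcase hrunne
        | cons a b =>
          exact ⟨_, List.getLast?_eq_getLast (by simp)⟩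
      · have : r.1 ≠ d := hlast r (by rw [hLlast]; exact hr)
        exact this (hrunletters r (List.mem_of_mem_getLast? hr))
    have hL2hd : ∀ p ∈ L2.head?, p.1 ≠ d := by
      intro p hp
      cases hc : L2 with
      | nil => rw [hc] at hp; simp at hp
      | cons r rest =>
        have := dropWhile_head_not Q L1 r rest (by rw [← hL2]; exact hc)
        rw [hc] at hp
        have hpr : r = p := by simpa using hp
        subst hpr
        simpa [hQ] using this
    have hL2last : ∀ p ∈ L2.getLast?, p.1 ≠ d := by
      intro p hp
      refine hlast p ?_
      rw [← hAL, ← hrunL, List.getLast?_append_of_ne_nil _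
        (fun h => hL2ne (List.append_eq_nil_iff.mp h).2),
        List.getLast?_append_of_ne_nil _ hL2ne]
      exact hp
    have hlen : L2.length < L.length := by
      have h1 := congrArg List.length hAL
      rw [List.length_append] at h1
      have h2 := congrArg List.length hrunL
      rw [List.length_append] at h2
      have hrl : 0 < run.length := List.length_pos_iff.mpr hrunne
      omega
    obtain ⟨s0', l', hs0'm, hs0'1, hl', hchain'⟩ :=
      IH L2 (Nat.lt_succ_iff.mp (lt_of_lt_of_le hlen hN)) hL2red hL2ne hL2hd hL2last
    -- the exponent
    set a : ℤ := if q.2 then (run.length : ℤ) else -(run.length : ℤ) with ha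
    have hane : a ≠ 0 := by
      have : 0 < run.length := List.length_pos_iff.mpr hrunne
      rw [ha]
      cases hq2 : q.2 <;> simp [hq2] <;> exact hrunne
    have hmkrun : FreeGroup.mk run = xx d ^ a := by
      have hw : (FreeGroup.of d ^ a).toWord = List.replicate a.natAbs (d, decide (0 < a)) :=
        zpow_word d a
      have h1 : a.natAbs = run.length := by
        rw [ha]; cases hq2 : q.2 <;> simp [hq2]
      have h2 : decide (0 < a) = q.2 := by
        have : 0 < run.length := List.length_pos_iff.mpr hrunne
        rw [ha]; cases hq2 : q.2 <;> simp [hq2] <;> omega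
      rw [h1, h2] at hw
      rw [hrunrep, ← hw, FreeGroup.mk_toWord]
      rfl
    refine ⟨FreeGroup.mk A, (a, s0') :: l', hAmem, hAone, ?_, ?_⟩
    · intro p hp
      rcases List.mem_cons.mp hp with h | h
      · subst h; exact ⟨hane, hs0'm, hs0'1⟩
      · exact hl' p h
    · rw [chain_cons, ← hchain', ← hmkrun, FreeGroup.mul_mk, FreeGroup.mul_mk,
        ← hAL, ← hrunL, List.append_assoc]


def artinFun (i : ℕ) : ℕ → F := fun k =>
  if k = i then FreeGroup.of i * FreeGroup.of (i + 1) * (FreeGroup.of i)⁻¹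
  else if k = i + 1 then FreeGroup.of i
  else FreeGroup.of k

def artinInvFun (i : ℕ) : ℕ → F := fun k =>
  if k = i then FreeGroup.of (i + 1)
  else if k = i + 1 then (FreeGroup.of (i + 1))⁻¹ * FreeGroup.of i * FreeGroup.of (i + 1)
  else FreeGroup.of k

def artinHom (i : ℕ) : F →* F := FreeGroup.lift (artinFun i)
def artinInvHom (i : ℕ) : F →* F := FreeGroup.lift (artinInvFun i)

lemma artin_inv_comp (i : ℕ) : (artinInvHom i).comp (artinHom i) = MonoidHom.id F := by
  apply FreeGroup.ext_hom
  intro k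
  have hii : i + 1 ≠ i := by omega
  simp only [MonoidHom.comp_apply, MonoidHom.id_apply, artinHom, FreeGroup.lift_apply_of]
  unfold artinFun
  by_cases h1 : k = i
  · subst h1
    simp [artinInvHom, artinInvFun, hii]
    group
  · by_cases h2 : k = i + 1
    · subst h2
      simp [artinInvHom, artinInvFun, hii, h1]
    · simp [artinInvHom, artinInvFun, h1, h2]

lemma artin_comp_inv (i : ℕ) : (artinHom i).comp (artinInvHom i) = MonoidHom.id F := by
  apply FreeGroup.ext_hom
  intro k
  have hii : i + 1 ≠ i := by omega
  simp only [MonoidHom.comp_apply, MonoidHom.id_apply, artinInvHom, FreeGroup.lift_apply_of]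
  unfold artinInvFun
  by_cases h1 : k = i
  · subst h1
    simp [artinHom, artinFun, hii]
  · by_cases h2 : k = i + 1
    · subst h2
      simp [artinHom, artinFun, hii, h1]
      group
    · simp [artinHom, artinFun, h1, h2]

def artinAut (i : ℕ) : MulAut F :=
  MonoidHom.toMulEquiv (artinHom i) (artinInvHom i) (artin_inv_comp i) (artin_comp_inv i)

lemma artinAut_apply (i : ℕ) (g : F) : artinAut i g = artinHom i g := rfl
lemma artinAut_symm_apply (i : ℕ) (g : F) : (artinAut i).symm g = artinInvHom i g := rfl
lemma mulAut_ext {φ ψ : MulAut F} (h : ∀ k, φ (FreeGroup.of k) = ψ (FreeGroup.of k)) :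
    φ = ψ := by
  apply MulEquiv.toMonoidHom_injective
  exact FreeGroup.ext_hom _ _ h

lemma artin_comm {i j : ℕ} (hij : i + 2 ≤ j) :
    artinAut i * artinAut j = artinAut j * artinAut i := by
  have f1 : j ≠ i := by omega
  have f2 : j ≠ i + 1 := by omega
  have f3 : j + 1 ≠ i := by omega
  have f4 : j + 1 ≠ i + 1 := by omega
  have f5 : i ≠ j := by omega
  have f6 : i ≠ j + 1 := by omega
  have f7 : i + 1 ≠ j := by omega
  have f8 : i + 1 ≠ j + 1 := by omega
  apply mulAut_ext
  intro k
  by_cases h1 : k = i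
  · subst h1
    simp [MulAut.mul_apply, artinAut_apply, artinHom, artinFun, f1, f2, f5, f6, f7, f8]
  · by_cases h2 : k = i + 1
    · subst h2
      simp [MulAut.mul_apply, artinAut_apply, artinHom, artinFun, f1, f2, f5, f6, f7, f8]
    · by_cases h3 : k = j
      · subst h3
        simp [MulAut.mul_apply, artinAut_apply, artinHom, artinFun, f1, f2, f3, f4, f5, f6, f7, f8]
      · by_cases h4 : k = j + 1
        · subst h4
          simp [MulAut.mul_apply, artinAut_apply, artinHom, artinFun, f1, f2, f3, f4, f5, f6, f7, f8]
        · simp [MulAut.mul_apply, artinAut_apply, artinHom, artinFun, h1, h2, h3, h4]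

lemma artin_braid (i : ℕ) :
    artinAut i * artinAut (i + 1) * artinAut i
      = artinAut (i + 1) * artinAut i * artinAut (i + 1) := by
  have f1 : i + 1 ≠ i := by omega
  have f2 : i + 2 ≠ i := by omega
  have f3 : i + 2 ≠ i + 1 := by omega
  have f4 : i ≠ i + 1 := by omega
  have f5 : i ≠ i + 2 := by omega
  have f6 : i + 1 ≠ i + 2 := by omega
  apply mulAut_ext
  intro k
  by_cases h1 : k = i
  · subst h1
    simp [MulAut.mul_apply, artinAut_apply, artinHom, artinFun, f1, f2, f3, f4, f5, f6]
    group
  · by_cases h2 : k = i + 1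
    · subst h2
      simp [MulAut.mul_apply, artinAut_apply, artinHom, artinFun, f1, f2, f3, f4, f5, f6]
    · by_cases h3 : k = i + 2
      · subst h3
        simp [MulAut.mul_apply, artinAut_apply, artinHom, artinFun, f1, f2, f3, f4, f5, f6]
      · have h2' : k ≠ i + 1 + 1 := by omega
        simp [MulAut.mul_apply, artinAut_apply, artinHom, artinFun, h1, h2, h3, h2']

lemma braid_rels_hold : ∀ r ∈ braidRels, FreeGroup.lift artinAut r = 1 := by
  intro r hr
  obtain ⟨i, j, h | h⟩ := hr
  · obtain ⟨hij, rfl⟩ := h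
    have h := artin_comm hij
    simp only [_root_.map_mul, _root_.map_inv, FreeGroup.lift_apply_of]
    rw [h]
    group
  · obtain ⟨rfl, rfl⟩ := h
    have h := artin_braid i
    simp only [_root_.map_mul, _root_.map_inv, FreeGroup.lift_apply_of]
    rw [h]
    group

def psi : BInf →* MulAut F := PresentedGroup.toGroup braid_rels_hold

lemma psi_sigma (i : ℕ) : psi (σ i) = artinAut i := PresentedGroup.toGroup.of braid_rels_hold

/-- the "shifted" property of an automorphism -/
def Kgood (φ : MulAut F) : Prop :=
  φ (FreeGroup.of 0) = FreeGroup.of 0 ∧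
    ∀ s, s ∈ gsub {i | i ≠ 0} ↔ φ s ∈ gsub {i | i ≠ 0}

lemma hom_gsub {I J : Set ℕ} (f : F →* F) (h : ∀ i ∈ I, f (FreeGroup.of i) ∈ gsub J) :
    ∀ s ∈ gsub I, f s ∈ gsub J := by
  intro s hs
  induction hs using Subgroup.closure_induction with
  | mem g hg =>
    obtain ⟨a, ha, rfl⟩ := hg
    exact h a ha
  | one => rw [_root_.map_one]; exact one_mem _
  | mul a b _ _ iha ihb => rw [_root_.map_mul]; exact mul_mem iha ihb
  | inv a _ ih => rw [_root_.map_inv]; exact inv_mem ih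

lemma of_mem_gsub {I : Set ℕ} {i : ℕ} (h : i ∈ I) : FreeGroup.of i ∈ gsub I :=
  Subgroup.subset_closure ⟨i, h, rfl⟩

lemma artin_succ_Kgood (k : ℕ) : Kgood (artinAut (k + 1)) := by
  constructor
  · rw [artinAut_apply, artinHom, FreeGroup.lift_apply_of]
    unfold artinFun
    rw [if_neg (by omega), if_neg (by omega)]
  · intro s
    constructor
    · intro hs
      rw [artinAut_apply]
      refine hom_gsub (artinHom (k + 1)) ?_ s hs
      intro i hi
      rw [artinHom, FreeGroup.lift_apply_of]
      unfold artinFun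
      by_cases h1 : i = k + 1
      · rw [if_pos h1]
        exact mul_mem (mul_mem (of_mem_gsub (by simp)) (of_mem_gsub (by simp)))
          (inv_mem (of_mem_gsub (by simp)))
      · rw [if_neg h1]
        by_cases h2 : i = k + 2
        · rw [if_pos h2]
          exact of_mem_gsub (by simp)
        · rw [if_neg h2]
          exact of_mem_gsub hi
    · intro hs
      have hback : ∀ t ∈ gsub {i | i ≠ 0}, artinInvHom (k + 1) t ∈ gsub {i | i ≠ 0} := by
        refine hom_gsub (artinInvHom (k + 1)) ?_
        intro i hi
        rw [artinInvHom, FreeGroup.lift_apply_of]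
        unfold artinInvFun
        by_cases h1 : i = k + 1
        · rw [if_pos h1]
          exact of_mem_gsub (by simp)
        · rw [if_neg h1]
          by_cases h2 : i = k + 2
          · rw [if_pos h2]
            exact mul_mem (mul_mem (inv_mem (of_mem_gsub (by simp)))
              (of_mem_gsub (by simp))) (of_mem_gsub (by simp))
          · rw [if_neg h2]
            exact of_mem_gsub hi
      have := hback _ hs
      have hid : artinInvHom (k + 1) (artinAut (k + 1) s) = s := by
        have hcomp := artin_inv_comp (k + 1)
        have := congrArg (fun (f : F →* F) => f s) hcomp
        simpa [artinAut_apply] using this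
      rwa [hid] at this

lemma Kgood_one : Kgood 1 := by
  constructor
  · rfl
  · intro s; rfl

lemma Kgood_mul {φ ψ' : MulAut F} (h1 : Kgood φ) (h2 : Kgood ψ') : Kgood (φ * ψ') := by
  obtain ⟨h10, h1S⟩ := h1
  obtain ⟨h20, h2S⟩ := h2
  constructor
  · rw [MulAut.mul_apply, h20, h10]
  · intro s
    rw [MulAut.mul_apply, ← h1S, ← h2S]

lemma Kgood_inv {φ : MulAut F} (h : Kgood φ) : Kgood φ⁻¹ := by
  obtain ⟨h0, hS⟩ := h
  constructor
  · have := congrArg (φ⁻¹ : MulAut F) h0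
    rw [← MulAut.mul_apply, inv_mul_cancel, MulAut.one_apply] at this
    exact this.symm
  · intro s
    rw [hS (φ⁻¹ s), ← MulAut.mul_apply, mul_inv_cancel, MulAut.one_apply]

lemma sh_Kgood (sh : BInf →* BInf) (hsh : ∀ i : ℕ, sh (σ i) = σ (i + 1)) (c : BInf) :
    Kgood (psi (sh c)) := by
  set H : Subgroup BInf :=
    { carrier := {g | Kgood (psi (sh g))}
      one_mem' := by simpa using Kgood_one
      mul_mem' := by
        intro a b ha hb
        simp only [Set.mem_setOf_eq, _root_.map_mul] at *
        exact Kgood_mul ha hb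
      inv_mem' := by
        intro a ha
        simp only [Set.mem_setOf_eq, _root_.map_inv] at *
        exact Kgood_inv ha } with hH
  have := PresentedGroup.generated_by braidRels H ?_ c
  · exact this
  · intro j
    show Kgood (psi (sh (σ j)))
    rw [hsh j, psi_sigma]
    exact artin_succ_Kgood j

/-! ### The invariant -/

def Inv (g : F) : Prop :=
  ∃ s0 l, s0 ∈ gsub {i | i ≠ 0} ∧ s0 ≠ 1 ∧
    (∀ p ∈ l, p.1 ≠ 0 ∧ p.2 ∈ gsub {i | i ≠ 0} ∧ p.2 ≠ 1) ∧
    g = FreeGroup.of 0 * chain 0 s0 l * (FreeGroup.of 0)⁻¹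

lemma sandwich_reduced (d : ℕ) {Lw : W} (hred : Reduced Lw) (hne : Lw ≠ [])
    (hhd : ∀ p ∈ Lw.head?, p.1 ≠ d) (hlast : ∀ p ∈ Lw.getLast?, p.1 ≠ d) :
    Reduced ((d, true) :: Lw ++ [(d, false)]) := by
  have h2 : Reduced (Lw ++ [(d, false)]) := by
    refine List.IsChain.append hred (List.isChain_singleton _) ?_
    intro x hx y hy
    have hy' : (d, false) = y := by simpa using hy
    subst hy'
    have hx' := hlast x hx
    exact fun hc => hx' hc.1
  refine List.isChain_cons.mpr ⟨?_, h2⟩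
  intro y hy
  change y ∈ (Lw ++ [(d, false)]).head? at hy
  rw [List.head?_append_of_ne_nil _ hne] at hy
  exact fun hc => (hhd y hy) hc.1.symm

lemma sandwich_mk (d : ℕ) (Lw : W) :
    FreeGroup.of d * FreeGroup.mk Lw * (FreeGroup.of d)⁻¹
      = FreeGroup.mk ((d, true) :: Lw ++ [(d, false)]) := by
  have h1 : (FreeGroup.of d : F) = FreeGroup.mk [(d, true)] := rfl
  have h2 : ((FreeGroup.of d : F))⁻¹ = FreeGroup.mk [(d, false)] := by
    rw [h1, FreeGroup.inv_mk]; rfl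
  rw [h2, h1, FreeGroup.mul_mk, FreeGroup.mul_mk]
  rfl

lemma Inv_shape {g : F} (h : Inv g) : ∃ Lw : W, Reduced Lw ∧ Lw ≠ [] ∧
    (∀ p ∈ Lw.head?, p.1 ≠ 0) ∧ (∀ p ∈ Lw.getLast?, p.1 ≠ 0) ∧
    g = FreeGroup.mk ((0, true) :: Lw ++ [(0, false)]) := by
  obtain ⟨s0, l, hs, hs1, hl, rfl⟩ := h
  obtain ⟨Lw, hmk, hred, hne, hhd, hlast⟩ := chain_word 0 l s0 hs hs1 hl
  exact ⟨Lw, hred, hne, hhd, hlast, by rw [hmk, sandwich_mk]⟩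

lemma Inv_ne_of0 {g : F} (h : Inv g) : g ≠ FreeGroup.of 0 := by
  obtain ⟨Lw, hred, hne, hhd, hlast, rfl⟩ := Inv_shape h
  intro hcontra
  have hR : Reduced ((0, true) :: Lw ++ [(0, false)]) :=
    sandwich_reduced 0 hred hne hhd hlast
  have h1 := toWord_mk_reduced hR
  rw [hcontra, FreeGroup.toWord_of] at h1
  have := congrArg List.length h1
  simp at this

lemma chain_map_aut (f : MulAut F) (d : ℕ) (hd : f (FreeGroup.of d) = FreeGroup.of d) :
    ∀ (l : List (ℤ × F)) (s0 : F),
      f (chain d s0 l) = chain d (f s0) (l.map fun p => (p.1, f p.2)) := by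
  intro l
  induction l with
  | nil => intro s0; rw [chain_nil, List.map_nil, chain_nil]
  | cons p l ih =>
    rcases p with ⟨a, t⟩
    intro s0
    rw [chain_cons, List.map_cons]
    rw [_root_.map_mul, _root_.map_mul, map_zpow]
    have hxd : f (xx d) = xx d := hd
    rw [hxd, ih]
    rw [chain_cons]

lemma Inv_alpha {φ : MulAut F} (hK : Kgood φ) {g : F} (h : Inv g) : Inv (φ g) := by
  obtain ⟨h0, hS⟩ := hK
  obtain ⟨s0, l, hs, hs1, hl, rfl⟩ := h
  refine ⟨φ s0, l.map fun p => (p.1, φ p.2), (hS s0).mp hs, ?_, ?_, ?_⟩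
  · intro hc
    exact hs1 (by simpa using φ.injective (by rw [hc, _root_.map_one]))
  · intro p hp
    rw [List.mem_map] at hp
    obtain ⟨q, hq, rfl⟩ := hp
    obtain ⟨hq1, hq2, hq3⟩ := hl q hq
    refine ⟨hq1, (hS q.2).mp hq2, ?_⟩
    intro hc
    have hc' : φ q.2 = 1 := hc
    exact hq3 (by simpa using φ.injective (by rw [hc', _root_.map_one]))
  · rw [_root_.map_mul, _root_.map_mul, _root_.map_inv, h0, chain_map_aut φ 0 h0]

/-- the conjugated image under the Artin generator -/
def usig (s : F) : F := (FreeGroup.of 0)⁻¹ * artinHom 0 s * FreeGroup.of 0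

lemma usig_mem {s : F} (hs : s ∈ gsub {i | i ≠ 0}) : usig s ∈ gsub {i | i ≠ 1} := by
  have hT : artinHom 0 s ∈ gsub {i | i ≠ 1} := by
    refine hom_gsub (artinHom 0) ?_ s hs
    intro i hi
    rw [artinHom, FreeGroup.lift_apply_of]
    unfold artinFun
    rw [if_neg hi]
    by_cases h2 : i = 1
    · rw [if_pos h2]
      exact of_mem_gsub (by simp)
    · rw [if_neg h2]
      exact of_mem_gsub h2
  exact mul_mem (mul_mem (inv_mem (of_mem_gsub (by simp))) hT) (of_mem_gsub (by simp))

lemma usig_ne_one {s : F} (hs : s ≠ 1) : usig s ≠ 1 := by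
  intro hc
  unfold usig at hc
  have h1 : artinHom 0 s = 1 := by
    have := congrArg (fun z => FreeGroup.of 0 * z * (FreeGroup.of 0)⁻¹) hc
    simpa [mul_assoc] using this
  have h2 : artinAut 0 s = 1 := by rw [artinAut_apply]; exact h1
  exact hs ((artinAut 0).injective (by simpa using h2))

lemma artin0_of0 : artinHom 0 (FreeGroup.of 0)
    = FreeGroup.of 0 * FreeGroup.of 1 * (FreeGroup.of 0)⁻¹ := by
  rw [artinHom, FreeGroup.lift_apply_of]
  unfold artinFun
  rw [if_pos rfl]

lemma sigma_chain : ∀ (l : List (ℤ × F)) (s0 : F),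
    artinHom 0 (chain 0 s0 l) =
      FreeGroup.of 0 * chain 1 (usig s0) (l.map fun p => (p.1, usig p.2))
        * (FreeGroup.of 0)⁻¹ := by
  intro l
  induction l with
  | nil =>
    intro s0
    rw [chain_nil, List.map_nil, chain_nil]
    unfold usig
    group
  | cons p l ih =>
    rcases p with ⟨a, t⟩
    intro s0
    rw [chain_cons, List.map_cons, chain_cons]
    rw [_root_.map_mul, _root_.map_mul, map_zpow, ih]
    have hx0 : artinHom 0 (xx 0) = FreeGroup.of 0 * FreeGroup.of 1 * (FreeGroup.of 0)⁻¹ :=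
      artin0_of0
    have hconj : (FreeGroup.of 0 * FreeGroup.of 1 * (FreeGroup.of 0)⁻¹ : F) ^ a
        = FreeGroup.of 0 * (FreeGroup.of 1 : F) ^ a * (FreeGroup.of 0)⁻¹ := by
      have h1 : (FreeGroup.of 0 * FreeGroup.of 1 * (FreeGroup.of 0)⁻¹ : F)
          = (MulAut.conj (FreeGroup.of 0 : F)) (FreeGroup.of 1) := by
        simp [MulAut.conj_apply]
      rw [h1, ← map_zpow]
      simp [MulAut.conj_apply]
    rw [hx0, hconj]
    unfold usig
    unfold xx
    group

lemma Inv_sigma {g : F} (h : Inv g) : Inv (artinAut 0 g) := by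
  obtain ⟨s0, l, hs, hs1, hl, rfl⟩ := h
  have hA : artinAut 0 (FreeGroup.of 0 * chain 0 s0 l * (FreeGroup.of 0)⁻¹)
      = FreeGroup.of 0 * (FreeGroup.of 1
          * chain 1 (usig s0) (l.map fun p => (p.1, usig p.2)) * (FreeGroup.of 1)⁻¹)
        * (FreeGroup.of 0)⁻¹ := by
    rw [artinAut_apply]
    rw [_root_.map_mul, _root_.map_mul, _root_.map_inv, artin0_of0, sigma_chain]
    group
  have hu0 : usig s0 ∈ gsub {i | i ≠ 1} := usig_mem hs
  have hu01 : usig s0 ≠ 1 := usig_ne_one hs1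
  have hlcond : ∀ p ∈ (l.map fun p => (p.1, usig p.2)),
      p.1 ≠ 0 ∧ p.2 ∈ gsub {i | i ≠ 1} ∧ p.2 ≠ 1 := by
    intro p hp
    rw [List.mem_map] at hp
    obtain ⟨q, hq, rfl⟩ := hp
    obtain ⟨hq1, hq2, hq3⟩ := hl q hq
    exact ⟨hq1, usig_mem hq2, usig_ne_one hq3⟩
  obtain ⟨Lw, hmk, hred, hne, hhd, hlast⟩ :=
    chain_word 1 (l.map fun p => (p.1, usig p.2)) (usig s0) hu0 hu01 hlcond
  have hMmk : FreeGroup.of 1 * chain 1 (usig s0) (l.map fun p => (p.1, usig p.2))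
        * (FreeGroup.of 1)⁻¹
      = FreeGroup.mk ((1, true) :: Lw ++ [(1, false)]) := by rw [hmk, sandwich_mk]
  have hMred : Reduced ((1, true) :: Lw ++ [(1, false)]) :=
    sandwich_reduced 1 hred hne hhd hlast
  have hMne : ((1, true) :: Lw ++ [(1, false)] : W) ≠ [] := by simp
  have hMhd : ∀ p ∈ ((1, true) :: Lw ++ [(1, false)] : W).head?, p.1 ≠ 0 := by
    intro p hp
    have : (1, true) = p := by simpa using hp
    rw [← this]; simp
  have hMlast : ∀ p ∈ ((1, true) :: Lw ++ [(1, false)] : W).getLast?, p.1 ≠ 0 := by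
    intro p hp
    rw [show ((1,true) :: Lw ++ [(1,false)] : W) = ((1,true) :: Lw) ++ [(1,false)] from rfl,
      List.getLast?_append_of_ne_nil _ (by simp)] at hp
    have : (1, false) = p := by simpa using hp
    rw [← this]; simp
  obtain ⟨s0'', l'', hs'', hs1'', hl'', hch''⟩ :=
    parseAux 0 ((1, true) :: Lw ++ [(1, false)] : W).length _ le_rfl hMred hMne hMhd hMlast
  exact ⟨s0'', l'', hs'', hs1'', hl'', by rw [hA, hMmk, hch'']⟩

lemma psi_posProd (sh : BInf →* BInf) (hsh : ∀ i : ℕ, sh (σ i) = σ (i + 1)) :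
    ∀ (n : ℕ) (c : ℕ → BInf) (g : F), Inv g → Inv (psi (posProd sh c n) g) := by
  intro n
  induction n with
  | zero =>
    intro c g hg
    exact Inv_alpha (sh_Kgood sh hsh (c 0)) hg
  | succ n ih =>
    intro c g hg
    have hstep : posProd sh c (n + 1) = posProd sh c n * σ 0 * sh (c (n + 1)) := rfl
    rw [hstep, _root_.map_mul, _root_.map_mul, MulAut.mul_apply, MulAut.mul_apply]
    refine ih c _ ?_
    rw [psi_sigma]
    exact Inv_sigma (Inv_alpha (sh_Kgood sh hsh (c (n + 1))) hg)

lemma part_one (sh : BInf →* BInf) (hsh : ∀ i : ℕ, sh (σ i) = σ (i + 1)) :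
    ∀ n : ℕ, 1 ≤ n → ∀ c : ℕ → BInf, posProd sh c n ≠ 1 := by
  intro n hn c hcontra
  cases n with
  | zero => omega
  | succ m =>
    have hval : Inv (psi (posProd sh c (m + 1)) (FreeGroup.of 0)) := by
      have hstep : posProd sh c (m + 1) = posProd sh c m * σ 0 * sh (c (m + 1)) := rfl
      rw [hstep, _root_.map_mul, _root_.map_mul, MulAut.mul_apply, MulAut.mul_apply]
      have h1 : psi (sh (c (m + 1))) (FreeGroup.of 0) = FreeGroup.of 0 :=
        (sh_Kgood sh hsh _).1
      rw [h1, psi_sigma]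
      have h2 : artinAut 0 (FreeGroup.of 0)
          = FreeGroup.of 0 * FreeGroup.of 1 * (FreeGroup.of 0)⁻¹ := by
        rw [artinAut_apply]; exact artin0_of0
      rw [h2]
      refine psi_posProd sh hsh m c _ ?_
      exact ⟨FreeGroup.of 1, [], of_mem_gsub (by simp), FreeGroup.of_ne_one 1,
        by simp, by rw [chain_nil]⟩
    have hne := Inv_ne_of0 hval
    apply hne
    rw [hcontra, _root_.map_one]
    rfl

lemma posProd_congr (sh : BInf →* BInf) : ∀ (n : ℕ) (c c' : ℕ → BInf),
    (∀ i ≤ n, c i = c' i) → posProd sh c n = posProd sh c' n := by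
  intro n
  induction n with
  | zero => intro c c' h; show sh (c 0) = sh (c' 0); rw [h 0 (by omega)]
  | succ n ih =>
    intro c c' h
    show posProd sh c n * σ 0 * sh (c (n + 1)) = posProd sh c' n * σ 0 * sh (c' (n + 1))
    rw [ih c c' (fun i hi => h i (by omega)), h (n + 1) (le_refl _)]

lemma posProd_mul_last (sh : BInf →* BInf) : ∀ (n : ℕ) (c : ℕ → BInf) (d : BInf),
    posProd sh c n * sh d = posProd sh (fun i => if i = n then c i * d else c i) n := by
  intro n c d
  cases n with
  | zero =>
    show sh (c 0) * sh d = sh (if 0 = 0 then c 0 * d else c 0)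
    rw [if_pos rfl, _root_.map_mul]
  | succ m =>
    show posProd sh c m * σ 0 * sh (c (m + 1)) * sh d
      = posProd sh _ m * σ 0 * sh (if m + 1 = m + 1 then c (m + 1) * d else c (m + 1))
    rw [if_pos rfl]
    have hc : posProd sh (fun i => if i = m + 1 then c i * d else c i) m = posProd sh c m :=
      posProd_congr sh m _ c (fun i hi => by rw [if_neg (by omega)])
    rw [hc, _root_.map_mul]
    group

lemma transgen_form (sh : BInf →* BInf) {a b : BInf}
    (h : Relation.TransGen (fun a b : BInf => ∃ x, braidAct sh a x = b) a b) :
    ∃ (n : ℕ) (c : ℕ → BInf), 1 ≤ n ∧ b = a * posProd sh c n * (sh a)⁻¹ := by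
  induction h with
  | single hrel =>
    obtain ⟨x, hx⟩ := hrel
    refine ⟨1, fun i => if i = 0 then x else 1, le_refl 1, ?_⟩
    rw [← hx]
    unfold braidAct
    have hpp : posProd sh (fun i => if i = 0 then x else 1) 1
        = sh x * σ 0 * sh 1 := by
      show sh (if 0 = 0 then x else 1) * σ 0 * sh (if 1 = 0 then x else 1) = _
      rw [if_pos rfl, if_neg (by omega)]
    rw [hpp, _root_.map_one, mul_one]
    group
  | tail hab hrel ih =>
    obtain ⟨n, c, hn, rfl⟩ := ih
    obtain ⟨y, hy⟩ := hrel
    rw [← hy]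
    unfold braidAct
    set b' : BInf := a * posProd sh c n * (sh a)⁻¹ with hb'
    set c1 : ℕ → BInf := fun i => if i = n then c i * (a⁻¹ * y) else c i with hc1
    set c2 : ℕ → BInf := fun i => if i = n + 1 then b'⁻¹ * a else c1 i with hc2
    refine ⟨n + 1, c2, by omega, ?_⟩
    have h1 : posProd sh c2 (n + 1) = posProd sh c1 n * σ 0 * sh (b'⁻¹ * a) := by
      show posProd sh c2 n * σ 0 * sh (c2 (n + 1)) = _
      have hcongr : posProd sh c2 n = posProd sh c1 n :=
        posProd_congr sh n c2 c1 (fun i hi => by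
          rw [hc2]
          exact if_neg (by omega))
      have hc2n : c2 (n + 1) = b'⁻¹ * a := by rw [hc2]; exact if_pos rfl
      rw [hcongr, hc2n]
    have h2 : posProd sh c1 n = posProd sh c n * sh (a⁻¹ * y) := by
      rw [posProd_mul_last sh n c (a⁻¹ * y)]
    have key : a * posProd sh c2 (n + 1) * (sh a)⁻¹
        = b' * sh y * σ 0 * (sh b')⁻¹ := by
      rw [h1, h2,
        show sh (b'⁻¹ * a) = (sh b')⁻¹ * sh a by rw [_root_.map_mul, _root_.map_inv],
        show sh (a⁻¹ * y) = (sh a)⁻¹ * sh y by rw [_root_.map_mul, _root_.map_inv],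
        hb']
      group
    exact key.symm

lemma part_two (sh : BInf →* BInf) (hsh : ∀ i : ℕ, sh (σ i) = σ (i + 1)) :
    Irreflexive (Relation.TransGen (fun a b : BInf => ∃ x, braidAct sh a x = b)) := by
  intro a ha
  obtain ⟨n, c, hn, heq⟩ := transgen_form sh ha
  have h1 : (1 : BInf) = posProd sh c n * (sh a)⁻¹ :=
    mul_left_cancel (a := a) (by rw [mul_one, ← mul_assoc, ← heq])
  have h2 : posProd sh (fun i => if i = n then c i * a⁻¹ else c i) n = 1 := by
    rw [← posProd_mul_last sh n c a⁻¹, _root_.map_inv]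
    exact h1.symm
  exact part_one sh hsh n hn _ h2

end BraidAux

/-- a σ₁-positive braid is never trivial: for every `n ≥ 1` and all
braids `c 0, …, c n`, the element `sh (c 0) * σ₁ * sh (c 1) * σ₁ * ⋯ * σ₁ * sh (c n)`
is not `1`. Consequently, the braid shelf `(B∞, ◃)` is acyclic: the transitive
closure of the division relation `a ⊏ b ↔ ∃ x, a ◃ x = b` is irreflexive.
Here `sh` is the shift endomorphism, i.e. `sh (σ i) = σ (i+1)` for all `i`. -/
theorem sigma1_positive_nontrivial_and_braid_shelf_acyclic
    (sh : BInf →* BInf) (hsh : ∀ i : ℕ, sh (σ i) = σ (i + 1)) :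
    (∀ n : ℕ, 1 ≤ n → ∀ c : ℕ → BInf, posProd sh c n ≠ 1) ∧
    Irreflexive (Relation.TransGen (fun a b : BInf => ∃ x, braidAct sh a x = b)) := by
  exact ⟨BraidAux.part_one sh hsh, BraidAux.part_two sh hsh⟩
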